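/- arXiv:1210.5228 — 2 statements merged into one kernel-verified Lean document; each statement's English description precedes it below -/
import Mathlib

section
/- Let W = (ℕ × ℕ)^ℤ with the product σ-algebra and let σ : W → W be the left shift. Let Z = W × W with the commuting transformations S₁(w, w') = (σw, w') and S₂(w, w') = (w, σw'). A probability measure λ on Z invariant under both S₁ and S₂ is ergodic for the generated ℤ² action (every measurable set invariant under both S₁ and S₂ has λ-measure 0 or 1) if and only if λ = λ₁ ⊗ λ₂ is the product of two shift-invariant ergodic probability measures λ₁, λ₂ on W. -/
open MeasureTheory

/-- The space `W = (ℕ × ℕ)^ℤ` of bi-infinite sequences, with the product σ-algebra. -/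
abbrev SeqW : Type := ℤ → ℕ × ℕ

/-- The left shift `σ` on `W`. -/
def shiftW (w : SeqW) : SeqW := fun n => w (n + 1)

/-- The transformation `S₁(w, w') = (σ w, w')` on `Z = W × W`. -/
def shiftFst (p : SeqW × SeqW) : SeqW × SeqW := (shiftW p.1, p.2)

/-- The transformation `S₂(w, w') = (w, σ w')` on `Z = W × W`. -/
def shiftSnd (p : SeqW × SeqW) : SeqW × SeqW := (p.1, shiftW p.2)

/-- The inverse of the left shift. -/
def shiftWInv (w : SeqW) : SeqW := fun n => w (n - 1)

lemma measurable_shiftW : Measurable shiftW :=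
  measurable_pi_lambda _ fun n => measurable_pi_apply (n + 1)

lemma measurable_shiftWInv : Measurable shiftWInv :=
  measurable_pi_lambda _ fun n => measurable_pi_apply (n - 1)

lemma shiftWInv_shiftW (w : SeqW) : shiftWInv (shiftW w) = w := by
  funext n; simp [shiftW, shiftWInv]

lemma shiftW_shiftWInv (w : SeqW) : shiftW (shiftWInv w) = w := by
  funext n; simp [shiftW, shiftWInv]

/-- An invariant probability measure absolutely continuous w.r.t. an "ergodic" invariant
probability measure coincides with it. -/
lemma eq_of_invariant_ac (μ ν : Measure SeqW) [IsProbabilityMeasure μ] [IsProbabilityMeasure ν]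
    (hμ : MeasurePreserving shiftW μ μ) (hν : MeasurePreserving shiftW ν ν)
    (herg : ∀ E : Set SeqW, MeasurableSet E → shiftW ⁻¹' E = E → μ E = 0 ∨ μ E = 1)
    (hac : ν ≪ μ) : ν = μ := by
  have hLD := Measure.haveLebesgueDecomposition_of_sigmaFinite ν μ
  set f : SeqW → ENNReal := ν.rnDeriv μ with hfdef
  have hf : Measurable f := Measure.measurable_rnDeriv ν μ
  have hwd : μ.withDensity f = ν := Measure.withDensity_rnDeriv_eq ν μ hac
  have hint : ∫⁻ x, f x ∂μ = 1 := by
    rw [Measure.lintegral_rnDeriv hac]; simp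
  -- f is invariant a.e.
  have hfT : (fun x => f (shiftW x)) =ᵐ[μ] f := by
    refine ae_eq_of_forall_setLIntegral_eq_of_sigmaFinite (hf.comp measurable_shiftW) hf ?_
    intro s hs _
    have hs' : MeasurableSet (shiftWInv ⁻¹' s) := measurable_shiftWInv hs
    have hss : shiftW ⁻¹' (shiftWInv ⁻¹' s) = s := by
      ext x; simp only [Set.mem_preimage, shiftWInv_shiftW]
    have h1 := hμ.setLIntegral_comp_preimage hs' hf
    rw [hss] at h1
    rw [h1]
    have h2 : ∀ t : Set SeqW, MeasurableSet t → ∫⁻ x in t, f x ∂μ = ν t := by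
      intro t ht
      rw [← hwd, withDensity_apply _ ht]
    rw [h2 _ hs', h2 _ hs]
    have : ν (shiftWInv ⁻¹' s) = ν (shiftW ⁻¹' (shiftWInv ⁻¹' s)) :=
      (hν.measure_preimage hs'.nullMeasurableSet).symm
    rw [this, hss]
  -- ergodicity
  have herg' : Ergodic shiftW μ := by
    refine ⟨hμ, ⟨fun s hs hs' => Filter.eventuallyConst_set'.2 ?_⟩⟩
    rcases herg s hs hs' with h | h
    · exact Or.inl (ae_eq_empty.2 h)
    · refine Or.inr (ae_eq_univ.2 ?_)
      rw [prob_compl_eq_one_sub hs, h, tsub_self]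
  set A : Set SeqW := {x | f x < 1} with hAdef
  have hA : MeasurableSet A := measurableSet_lt hf measurable_const
  have hAinv : shiftW ⁻¹' A =ᵐ[μ] A := by
    refine Filter.eventuallyEq_set.2 (hfT.mono fun x hx => ?_)
    simp only [Set.mem_preimage, hAdef, Set.mem_setOf_eq, hx]
  rcases herg'.quasiErgodic.ae_empty_or_univ₀ hA.nullMeasurableSet hAinv with h | h
  · -- 1 ≤ f a.e., hence f = 1 a.e.
    have hge : ∀ᵐ x ∂μ, 1 ≤ f x := by
      have hA0 : μ A = 0 := ae_eq_empty.1 h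
      filter_upwards [measure_eq_zero_iff_ae_notMem.1 hA0] with x hx
      simpa [hAdef, not_lt] using hx
    have hf1 : f =ᵐ[μ] 1 := by
      have hsub : ∫⁻ x, (f x - 1) ∂μ = 0 := by
        rw [lintegral_sub measurable_const (by simp) hge, hint]
        simp
      have := (lintegral_eq_zero_iff (hf.sub measurable_const)).1 hsub
      filter_upwards [this, hge] with x h1 h2
      have : f x - 1 = 0 := h1
      have hle : f x ≤ 1 := tsub_eq_zero_iff_le.1 this
      exact le_antisymm hle h2
    rw [← hwd, withDensity_congr_ae hf1, withDensity_one]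
  · -- f < 1 a.e., contradiction
    exfalso
    have hlt : ∀ᵐ x ∂μ, f x < 1 := by
      have : μ Aᶜ = 0 := ae_eq_univ.1 h
      filter_upwards [measure_eq_zero_iff_ae_notMem.1 this] with x hx
      simpa [hAdef] using hx
    have hle : f ≤ᵐ[μ] fun _ => 1 := hlt.mono fun x hx => hx.le
    have hsub : ∫⁻ x, (1 - f x) ∂μ = 0 := by
      rw [lintegral_sub hf (by rw [hint]; exact ENNReal.one_ne_top) hle, hint]
      simp
    have hge := (lintegral_eq_zero_iff (measurable_const.sub hf)).1 hsub
    have : ∀ᵐ x ∂μ, (1 : ENNReal) ≤ f x := by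
      filter_upwards [hge] with x hx
      exact tsub_eq_zero_iff_le.1 hx
    have hne : (ae μ).NeBot := ae_neBot.2 (IsProbabilityMeasure.ne_zero μ)
    obtain ⟨x, hx1, hx2⟩ := (hlt.and this).exists
    exact absurd hx2 (not_le.2 hx1)

/-- a probability measure `λ` on `Z = W × W` invariant under both `S₁` and
`S₂` is ergodic for the generated `ℤ²` action if and only if it is the product of two
shift-invariant ergodic probability measures on `W`. -/
theorem ergodic_Z2_iff_product_of_ergodics
    (lam : Measure (SeqW × SeqW)) [IsProbabilityMeasure lam]
    (hinv₁ : MeasurePreserving shiftFst lam lam)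
    (hinv₂ : MeasurePreserving shiftSnd lam lam) :
    ((∀ E : Set (SeqW × SeqW), MeasurableSet E →
        shiftFst ⁻¹' E = E → shiftSnd ⁻¹' E = E → lam E = 0 ∨ lam E = 1) ↔
      ∃ lam₁ lam₂ : Measure SeqW, IsProbabilityMeasure lam₁ ∧ IsProbabilityMeasure lam₂ ∧
        MeasurePreserving shiftW lam₁ lam₁ ∧ MeasurePreserving shiftW lam₂ lam₂ ∧
        (∀ E : Set SeqW, MeasurableSet E → shiftW ⁻¹' E = E → lam₁ E = 0 ∨ lam₁ E = 1) ∧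
        (∀ E : Set SeqW, MeasurableSet E → shiftW ⁻¹' E = E → lam₂ E = 0 ∨ lam₂ E = 1) ∧
        lam = lam₁.prod lam₂) := by
  constructor
  · intro herg
    set lam₁ : Measure SeqW := lam.map Prod.fst with h1def
    set lam₂ : Measure SeqW := lam.map Prod.snd with h2def
    have hp1 : IsProbabilityMeasure lam₁ := Measure.isProbabilityMeasure_map measurable_fst.aemeasurable
    have hp2 : IsProbabilityMeasure lam₂ := Measure.isProbabilityMeasure_map measurable_snd.aemeasurable
    have hfst : Prod.fst ∘ shiftFst = shiftW ∘ Prod.fst := rfl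
    have hsnd : Prod.snd ∘ shiftSnd = shiftW ∘ Prod.snd := rfl
    have hmp1 : MeasurePreserving shiftW lam₁ lam₁ := by
      refine ⟨measurable_shiftW, ?_⟩
      rw [h1def, Measure.map_map measurable_shiftW measurable_fst, ← hfst,
        ← Measure.map_map measurable_fst hinv₁.measurable, hinv₁.map_eq]
    have hmp2 : MeasurePreserving shiftW lam₂ lam₂ := by
      refine ⟨measurable_shiftW, ?_⟩
      rw [h2def, Measure.map_map measurable_shiftW measurable_snd, ← hsnd,
        ← Measure.map_map measurable_snd hinv₂.measurable, hinv₂.map_eq]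
    have herg₁ : ∀ E : Set SeqW, MeasurableSet E → shiftW ⁻¹' E = E →
        lam₁ E = 0 ∨ lam₁ E = 1 := by
      intro E hE hEinv
      rw [h1def, Measure.map_apply measurable_fst hE]
      refine herg _ (measurable_fst hE) ?_ ?_
      · ext p; simp only [Set.mem_preimage, shiftFst]
        rw [show shiftW p.1 ∈ E ↔ p.1 ∈ shiftW ⁻¹' E from Iff.rfl, hEinv]
      · rfl
    have herg₂ : ∀ E : Set SeqW, MeasurableSet E → shiftW ⁻¹' E = E →
        lam₂ E = 0 ∨ lam₂ E = 1 := by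
      intro E hE hEinv
      rw [h2def, Measure.map_apply measurable_snd hE]
      refine herg _ (measurable_snd hE) rfl ?_
      ext p; simp only [Set.mem_preimage, shiftSnd]
      rw [show shiftW p.2 ∈ E ↔ p.2 ∈ shiftW ⁻¹' E from Iff.rfl, hEinv]
    refine ⟨lam₁, lam₂, hp1, hp2, hmp1, hmp2, herg₁, herg₂, ?_⟩
    refine (Measure.prod_eq ?_).symm
    intro s t hs ht
    have hrect : ∀ u : Set SeqW, u ×ˢ t = Prod.fst ⁻¹' u ∩ Prod.snd ⁻¹' t := by
      intro u; ext p; simp [Set.mem_prod]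
    by_cases hc : lam₂ t = 0
    · have : lam (s ×ˢ t) = 0 := by
        refine measure_mono_null ?_ (by rwa [h2def, Measure.map_apply measurable_snd ht] at hc)
        intro p hp; exact hp.2
      rw [this, hc, mul_zero]
    · set c := lam₂ t with hcdef
      have hcle : c ≤ 1 := prob_le_one
      have hcne : c ≠ ⊤ := (hcle.trans_lt (by norm_num)).ne
      have hct : lam (Prod.snd ⁻¹' t) = c := by
        rw [hcdef, h2def, Measure.map_apply measurable_snd ht]
      set ν : Measure SeqW := c⁻¹ • ((lam.restrict (Prod.snd ⁻¹' t)).map Prod.fst) with hνdef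
      have hν_apply : ∀ u : Set SeqW, MeasurableSet u → ν u = c⁻¹ * lam (u ×ˢ t) := by
        intro u hu
        rw [hνdef]
        simp only [Measure.smul_apply, smul_eq_mul]
        rw [Measure.map_apply measurable_fst hu,
          Measure.restrict_apply (measurable_fst hu), ← hrect u]
      have hνprob : IsProbabilityMeasure ν := by
        constructor
        rw [hν_apply _ MeasurableSet.univ]
        have : (Set.univ : Set SeqW) ×ˢ t = Prod.snd ⁻¹' t := by
          ext p; simp
        rw [this, hct, ENNReal.inv_mul_cancel hc hcne]
      have hνmp : MeasurePreserving shiftW ν ν := by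
        refine ⟨measurable_shiftW, ?_⟩
        ext u hu
        rw [Measure.map_apply measurable_shiftW hu, hν_apply _ (measurable_shiftW hu),
          hν_apply _ hu]
        congr 1
        have heq : (shiftW ⁻¹' u) ×ˢ t = shiftFst ⁻¹' (u ×ˢ t) := by
          ext p; simp [Set.mem_prod, shiftFst]
        rw [heq, hinv₁.measure_preimage ((hu.prod ht).nullMeasurableSet)]
      have hνac : ν ≪ lam₁ := by
        refine Measure.AbsolutelyContinuous.mk fun u hu hu0 => ?_
        rw [hν_apply _ hu]
        have : lam (u ×ˢ t) = 0 := by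
          refine measure_mono_null (fun p hp => hp.1) ?_
          rwa [h1def, Measure.map_apply measurable_fst hu] at hu0
        rw [this, mul_zero]
      have hνeq : ν = lam₁ := eq_of_invariant_ac lam₁ ν hmp1 hνmp herg₁ hνac
      have := hν_apply s hs
      rw [hνeq] at this
      rw [this, mul_comm (c⁻¹ * lam (s ×ˢ t)) c, ← mul_assoc,
        ENNReal.mul_inv_cancel hc hcne, one_mul]
  · rintro ⟨lam₁, lam₂, hp1, hp2, hmp1, hmp2, herg₁, herg₂, rfl⟩
    intro E hE hE1 hE2
    have hslice : ∀ w : SeqW, MeasurableSet (Prod.mk w ⁻¹' E) :=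
      fun w => measurable_prodMk_left hE
    have hslice_inv : ∀ w : SeqW, shiftW ⁻¹' (Prod.mk w ⁻¹' E) = Prod.mk w ⁻¹' E := by
      intro w
      ext x
      simp only [Set.mem_preimage]
      constructor
      · intro hx
        have : (w, x) ∈ shiftSnd ⁻¹' E := hx
        rwa [hE2] at this
      · intro hx
        have : (w, x) ∈ shiftSnd ⁻¹' E := by rwa [hE2]
        exact this
    have h01 : ∀ w : SeqW, lam₂ (Prod.mk w ⁻¹' E) = 0 ∨ lam₂ (Prod.mk w ⁻¹' E) = 1 :=
      fun w => herg₂ _ (hslice w) (hslice_inv w)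
    set B : Set SeqW := {w | lam₂ (Prod.mk w ⁻¹' E) = 1} with hBdef
    have hB : MeasurableSet B :=
      (measurable_measure_prodMk_left hE) (measurableSet_singleton 1)
    have hBinv : shiftW ⁻¹' B = B := by
      ext w
      simp only [Set.mem_preimage, hBdef, Set.mem_setOf_eq]
      have : Prod.mk (shiftW w) ⁻¹' E = Prod.mk w ⁻¹' E := by
        ext x
        simp only [Set.mem_preimage]
        constructor
        · intro hx
          have : (w, x) ∈ shiftFst ⁻¹' E := hx
          rwa [hE1] at this
        · intro hx
          have : (w, x) ∈ shiftFst ⁻¹' E := by rwa [hE1]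
          exact this
      rw [this]
    have hlamE : (lam₁.prod lam₂) E = lam₁ B := by
      rw [Measure.prod_apply hE]
      have : ∀ w : SeqW, lam₂ (Prod.mk w ⁻¹' E) = B.indicator (fun _ => 1) w := by
        intro w
        rcases h01 w with h | h
        · rw [h]
          rw [Set.indicator_apply]
          split_ifs with hw
          · exact absurd (hBdef ▸ hw) (by simp [h])
          · rfl
        · rw [h, Set.indicator_apply]
          split_ifs with hw
          · rfl
          · exact absurd h hw
      rw [lintegral_congr this, lintegral_indicator hB]
      simp
    rw [hlamE]
    exact herg₁ B hB hBinv
end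

section
/- Let M be an invertible 2×2 real matrix such that the two entries of its first column are rationally independent and the two entries of its second column are rationally independent. Consider the ℝ² action on the torus 𝕋² = ℝ²/ℤ² defined by S_v x = x + Mv (mod ℤ²). Then there exists a pair 𝒯 of half-open rectangular tiles in ℝ² and a map Φ : 𝕋² → Y_𝒯 that is equivariant: Φ(S_v x) = S_v^Y(Φ(x)) for all x ∈ 𝕋² and v ∈ ℝ², where S^Y denotes the translation action on Y_𝒯. -/
open Set MeasureTheory

namespace Tiling2

/-- Points of the plane. -/
abbrev Pt : Type := ℝ × ℝ

/-- The half-open rectangle `[0, w) × [0, h)`. -/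
def rect (w h : ℝ) : Set Pt := Ico (0 : ℝ) w ×ˢ Ico (0 : ℝ) h

/-- `P ⊆ ℝ² × Fin k` is a tiling of `ℝ²` by the half-open rectangles with sizes
`sz : Fin k → ℝ × ℝ` (width, height) if the translated rectangles
`{p + rect (sz i) : (p, i) ∈ P}` partition `ℝ²`: every point lies in exactly one. -/
def IsTiling {k : ℕ} (sz : Fin k → ℝ × ℝ) (P : Set (Pt × Fin k)) : Prop :=
  ∀ x : Pt, ∃! q : Pt × Fin k, q ∈ P ∧ x - q.1 ∈ rect (sz q.2).1 (sz q.2).2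

/-- The space `Y_𝒯` of all tilings of `ℝ²` by the tiles with sizes `sz`. -/
def Tilings {k : ℕ} (sz : Fin k → ℝ × ℝ) : Type := {P : Set (Pt × Fin k) // IsTiling sz P}

/-- The σ-algebra on `Y_𝒯` generated by the sets
`{P : some (p,i) ∈ P has p ∈ U and i = j}`, for `U ⊆ ℝ²` open and `j : Fin k`. -/
instance instMS {k : ℕ} (sz : Fin k → ℝ × ℝ) : MeasurableSpace (Tilings sz) :=
  MeasurableSpace.generateFrom
    {s | ∃ (U : Set Pt) (j : Fin k), IsOpen U ∧
      s = {P : Tilings sz | ∃ q ∈ P.val, q.1 ∈ U ∧ q.2 = j}}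

/-- Translation `S_v P = {(p - v, i) : (p, i) ∈ P}` on sets of placed tiles. -/
def trSet {k : ℕ} (v : Pt) (P : Set (Pt × Fin k)) : Set (Pt × Fin k) :=
  (fun q : Pt × Fin k => (q.1 - v, q.2)) '' P

theorem IsTiling.trSet {k : ℕ} {sz : Fin k → ℝ × ℝ} {P : Set (Pt × Fin k)}
    (h : IsTiling sz P) (v : Pt) : IsTiling sz (Tiling2.trSet v P) := by
  intro x
  obtain ⟨q, ⟨hqP, hqx⟩, huniq⟩ := h (x + v)
  refine ⟨(q.1 - v, q.2), ⟨⟨q, hqP, rfl⟩, ?_⟩, ?_⟩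
  · have hx : x - (q.1 - v) = x + v - q.1 := by abel
    rw [hx]; exact hqx
  · rintro r ⟨⟨s, hsP, rfl⟩, hrx⟩
    have h2 : s = q := by
      refine huniq s ⟨hsP, ?_⟩
      have hx : x + v - s.1 = x - (s.1 - v) := by abel
      rw [hx]; exact hrx
    rw [h2]

/-- The translation action `S_v` on the space of tilings. -/
def S {k : ℕ} (sz : Fin k → ℝ × ℝ) (v : Pt) (x : Tilings sz) : Tilings sz :=
  ⟨trSet v x.1, x.2.trSet v⟩

/-- The closed placed tile (closure of the placed half-open rectangle) of `q = (p, i)`. -/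
def closedTile {k : ℕ} (sz : Fin k → ℝ × ℝ) (q : Pt × Fin k) : Set Pt :=
  Icc q.1.1 (q.1.1 + (sz q.2).1) ×ˢ Icc q.1.2 (q.1.2 + (sz q.2).2)

/-- The union of the boundaries of the placed tiles of `P`. -/
def bdry {k : ℕ} (sz : Fin k → ℝ × ℝ) (P : Set (Pt × Fin k)) : Set Pt :=
  ⋃ q ∈ P, frontier (closedTile sz q)

/-- The four closed faces of the placed tile `q`. -/
def faces {k : ℕ} (sz : Fin k → ℝ × ℝ) (q : Pt × Fin k) : Set (Set Pt) :=
  { ({q.1.1} : Set ℝ) ×ˢ Icc q.1.2 (q.1.2 + (sz q.2).2),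
    ({q.1.1 + (sz q.2).1} : Set ℝ) ×ˢ Icc q.1.2 (q.1.2 + (sz q.2).2),
    Icc q.1.1 (q.1.1 + (sz q.2).1) ×ˢ ({q.1.2} : Set ℝ),
    Icc q.1.1 (q.1.1 + (sz q.2).1) ×ˢ ({q.1.2 + (sz q.2).2} : Set ℝ) }

/-- `e` is a shared edge of `P`: a common closed face of two distinct placed tiles. -/
def SharedEdge {k : ℕ} (sz : Fin k → ℝ × ℝ) (P : Set (Pt × Fin k)) (e : Set Pt) : Prop :=
  ∃ q ∈ P, ∃ q' ∈ P, q ≠ q' ∧ e ∈ faces sz q ∧ e ∈ faces sz q'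

/-- `ℓ` is a (nonempty) horizontal segment: `I × {y}` with `I` a nonempty interval. -/
def IsHSeg (ℓ : Set Pt) : Prop :=
  ∃ (I : Set ℝ) (y : ℝ), I.Nonempty ∧ Convex ℝ I ∧ ℓ = I ×ˢ ({y} : Set ℝ)

/-- `ℓ` is a (nonempty) vertical segment: `{a} × I` with `I` a nonempty interval. -/
def IsVSeg (ℓ : Set Pt) : Prop :=
  ∃ (a : ℝ) (I : Set ℝ), I.Nonempty ∧ Convex ℝ I ∧ ℓ = ({a} : Set ℝ) ×ˢ I

/-- `ℓ` contains no shared edge of `P`. -/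
def NoSharedEdgeWithin {k : ℕ} (sz : Fin k → ℝ × ℝ) (P : Set (Pt × Fin k))
    (ℓ : Set Pt) : Prop :=
  ∀ e : Set Pt, SharedEdge sz P e → ¬e ⊆ ℓ

/-- `ℓ` is a shear of `P`: a maximal horizontal or vertical segment contained in the
union of the boundaries of the placed tiles and containing no shared edge. -/
def IsShear {k : ℕ} (sz : Fin k → ℝ × ℝ) (P : Set (Pt × Fin k)) (ℓ : Set Pt) : Prop :=
  (IsHSeg ℓ ∨ IsVSeg ℓ) ∧ ℓ ⊆ bdry sz P ∧ NoSharedEdgeWithin sz P ℓ ∧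
    ∀ ℓ' : Set Pt, (IsHSeg ℓ' ∨ IsVSeg ℓ') → ℓ' ⊆ bdry sz P →
      NoSharedEdgeWithin sz P ℓ' → ℓ ⊆ ℓ' → ℓ' = ℓ

/-- `ℓ` is a closed half-line (horizontal or vertical). -/
def SemiInfinite (ℓ : Set Pt) : Prop :=
  (∃ y a : ℝ, ℓ = Ici a ×ˢ ({y} : Set ℝ) ∨ ℓ = Iic a ×ˢ ({y} : Set ℝ)) ∨
    (∃ x a : ℝ, ℓ = ({x} : Set ℝ) ×ˢ Ici a ∨ ℓ = ({x} : Set ℝ) ×ˢ Iic a)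

/-- `ℓ` is a full (horizontal or vertical) line. -/
def BiInfinite (ℓ : Set Pt) : Prop :=
  (∃ y : ℝ, ℓ = (univ : Set ℝ) ×ˢ ({y} : Set ℝ)) ∨
    (∃ x : ℝ, ℓ = ({x} : Set ℝ) ×ˢ (univ : Set ℝ))

end Tiling2

open Tiling2

/-- The base L-shaped periodic tiling. -/
def P0 (a b c d : ℝ) : Set (Pt × Fin 2) :=
  {z | ∃ m n : ℤ, z = (((m : ℝ) * a + n * c, (n : ℝ) * d - m * b), (0 : Fin 2)) ∨
       z = (((m : ℝ) * a + n * c, (n : ℝ) * d - m * b + d), (1 : Fin 2))}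

lemma sub_mem_rect_iff (x₁ x₂ s t w h : ℝ) :
    ((x₁, x₂) : Pt) - (s, t) ∈ rect w h ↔ (s ≤ x₁ ∧ x₁ < s + w) ∧ (t ≤ x₂ ∧ x₂ < t + h) := by
  simp only [rect, Set.mem_prod, Set.mem_Ico, Prod.fst_sub, Prod.snd_sub]
  constructor <;> rintro ⟨⟨h1, h2⟩, h3, h4⟩ <;>
    exact ⟨⟨by linarith, by linarith⟩, by linarith, by linarith⟩

lemma isTiling_P0 {a b c d : ℝ} (ha : 0 < a) (hb : 0 < b) (hc : 0 < c) (hd : 0 < d) :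
    IsTiling ![(a, d), (c, b)] (P0 a b c d) := by
  have flu : ∀ (k : ℤ) (t e : ℝ), 0 < e → (k : ℝ) * e ≤ t → t < ((k : ℝ) + 1) * e →
      ⌊t / e⌋ = k := by
    intro k t e he h1 h2
    rw [Int.floor_eq_iff]
    constructor
    · rw [le_div_iff₀ he]; exact h1
    · rw [div_lt_iff₀ he]; push_cast; exact h2
  rintro ⟨x₁, x₂⟩
  obtain ⟨U, hUdef⟩ : ∃ U : ℤ → ℝ,
      ∀ m : ℤ, U m = ((⌊(x₁ - m * a) / c⌋ : ℝ) + 1) * d + b - m * b := ⟨_, fun _ => rfl⟩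
  have hUstep : ∀ m : ℤ, U (m + 1) + b ≤ U m := by
    intro m
    have hnum : x₁ - ((m : ℝ) + 1) * a ≤ x₁ - m * a := by nlinarith
    have h0 : (x₁ - ((m : ℝ) + 1) * a) / c ≤ (x₁ - m * a) / c := by gcongr
    have h2 : (⌊(x₁ - ((m : ℝ) + 1) * a) / c⌋ : ℝ) ≤ (⌊(x₁ - m * a) / c⌋ : ℝ) := by
      exact_mod_cast Int.floor_le_floor h0
    have h3 := mul_le_mul_of_nonneg_right h2 hd.le
    rw [hUdef, hUdef]
    push_cast
    linarith
  have hUanti : StrictAnti U := strictAnti_int_of_succ_lt fun m => by linarith [hUstep m]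
  have hUub : ∀ m : ℤ, U m ≤ x₁ * d / c + d + b - m * (a * d / c + b) := by
    intro m
    have h1 : (⌊(x₁ - m * a) / c⌋ : ℝ) ≤ (x₁ - m * a) / c := Int.floor_le _
    have h2 := mul_le_mul_of_nonneg_right h1 hd.le
    have h3 : ((x₁ - m * a) / c) * d = x₁ * d / c - m * (a * d / c) := by ring
    have h4 : (m : ℝ) * (a * d / c + b) = m * (a * d / c) + m * b := by ring
    rw [hUdef]
    linarith
  have hUlb : ∀ m : ℤ, x₁ * d / c + b - m * (a * d / c + b) ≤ U m := by
    intro m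
    have h1 : (x₁ - m * a) / c ≤ (⌊(x₁ - m * a) / c⌋ : ℝ) + 1 := (Int.lt_floor_add_one _).le
    have h2 := mul_le_mul_of_nonneg_right h1 hd.le
    have h3 : ((x₁ - m * a) / c) * d = x₁ * d / c - m * (a * d / c) := by ring
    have h4 : (m : ℝ) * (a * d / c + b) = m * (a * d / c) + m * b := by ring
    rw [hUdef]
    linarith
  have hpos : 0 < a * d / c + b := by positivity
  have hEx2 : ∃ m : ℤ, x₂ < U m := by
    obtain ⟨m, hm⟩ := exists_int_lt ((x₁ * d / c + b - x₂) / (a * d / c + b))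
    refine ⟨m, ?_⟩
    have h2 : (m : ℝ) * (a * d / c + b) < x₁ * d / c + b - x₂ := by
      have := mul_lt_mul_of_pos_right hm hpos
      rwa [div_mul_cancel₀ _ hpos.ne'] at this
    linarith [hUlb m]
  have hBdd : ∃ bnd : ℤ, ∀ z : ℤ, x₂ < U z → z ≤ bnd := by
    refine ⟨⌈(x₁ * d / c + d + b - x₂) / (a * d / c + b)⌉, ?_⟩
    intro z hz
    have h2 : (z : ℝ) * (a * d / c + b) < x₁ * d / c + d + b - x₂ := by linarith [hUub z]
    have h3 : (z : ℝ) < (x₁ * d / c + d + b - x₂) / (a * d / c + b) := by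
      rw [lt_div_iff₀ hpos]; exact h2
    exact (Int.lt_ceil.mpr h3).le
  obtain ⟨m, hm, hmax⟩ := Int.exists_greatest_of_bdd hBdd hEx2
  have hUm1 : U (m + 1) ≤ x₂ := by
    by_contra h
    push_neg at h
    have := hmax (m + 1) h
    omega
  obtain ⟨N, hN⟩ : ∃ N : ℤ, N = ⌊(x₁ - m * a) / c⌋ := ⟨_, rfl⟩
  have hup : x₂ + m * b < ((N : ℝ) + 1) * d + b := by
    rw [hUdef, ← hN] at hm
    linarith
  have hlow : ((⌊(x₁ - m * a - a) / c⌋ : ℝ) + 1) * d ≤ x₂ + m * b := by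
    rw [hUdef] at hUm1
    have h2 : x₁ - ((m : ℤ) + 1 : ℤ) * a = x₁ - m * a - a := by push_cast; ring
    rw [h2] at hUm1
    push_cast at hUm1
    linarith
  have hNle : (N : ℝ) * c ≤ x₁ - m * a := by
    have h1 : (N : ℝ) ≤ (x₁ - m * a) / c := by rw [hN]; exact Int.floor_le _
    rwa [le_div_iff₀ hc] at h1
  have hNlt : x₁ - m * a < ((N : ℝ) + 1) * c := by
    have h1 : (x₁ - m * a) / c < (N : ℝ) + 1 := by rw [hN]; exact Int.lt_floor_add_one _
    rwa [div_lt_iff₀ hc] at h1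
  -- key: any covering tile has band index m
  have key : ∀ (m' n' : ℤ),
      (((m' : ℝ) * a + n' * c ≤ x₁ ∧ x₁ < m' * a + n' * c + a ∧
        (n' : ℝ) * d - m' * b ≤ x₂ ∧ x₂ < n' * d - m' * b + d) ∨
       ((m' : ℝ) * a + n' * c ≤ x₁ ∧ x₁ < m' * a + n' * c + c ∧
        (n' : ℝ) * d - m' * b + d ≤ x₂ ∧ x₂ < n' * d - m' * b + d + b)) → m' = m := by
    intro m' n' hcov
    have hn'F : (n' : ℝ) ≤ (⌊(x₁ - m' * a) / c⌋ : ℝ) := by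
      have h1 : (n' : ℝ) ≤ (x₁ - m' * a) / c := by
        rw [le_div_iff₀ hc]
        rcases hcov with ⟨h1, _, _, _⟩ | ⟨h1, _, _, _⟩ <;> linarith
      exact_mod_cast Int.le_floor.mpr (by exact_mod_cast h1)
    have hup' : x₂ < U m' := by
      rw [hUdef]
      have h5 := mul_le_mul_of_nonneg_right
        (by linarith : (n' : ℝ) + 1 ≤ (⌊(x₁ - m' * a) / c⌋ : ℝ) + 1) hd.le
      rcases hcov with ⟨_, _, _, h4⟩ | ⟨_, _, _, h4⟩ <;> linarith
    have hlow' : U (m' + 1) ≤ x₂ := by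
      rw [hUdef]
      have h2 : x₁ - ((m' : ℤ) + 1 : ℤ) * a = x₁ - m' * a - a := by push_cast; ring
      rw [h2]
      push_cast
      rcases hcov with ⟨h1, h2, h3, h4⟩ | ⟨h1, h2, h3, h4⟩
      · have h5 : (x₁ - m' * a - a) / c < (n' : ℝ) := by
          rw [div_lt_iff₀ hc]; linarith
        have h6 : (⌊(x₁ - m' * a - a) / c⌋ : ℝ) + 1 ≤ (n' : ℝ) := by
          have h9 : ⌊(x₁ - m' * a - a) / c⌋ < n' := Int.floor_lt.mpr (by exact_mod_cast h5)
          exact_mod_cast h9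
        have h7 := mul_le_mul_of_nonneg_right h6 hd.le
        linarith
      · have h5 : (x₁ - m' * a - a) / c < (n' : ℝ) + 1 := by
          rw [div_lt_iff₀ hc]; linarith
        have h6 : (⌊(x₁ - m' * a - a) / c⌋ : ℝ) + 1 ≤ (n' : ℝ) + 1 := by
          have h9 : ⌊(x₁ - m' * a - a) / c⌋ < n' + 1 := Int.floor_lt.mpr (by push_cast; exact h5)
          have h8 : ⌊(x₁ - m' * a - a) / c⌋ ≤ n' := by omega
          have h10 : (⌊(x₁ - m' * a - a) / c⌋ : ℝ) ≤ (n' : ℝ) := by exact_mod_cast h8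
          linarith
        have h7 := mul_le_mul_of_nonneg_right h6 hd.le
        linarith
    have hle : m' ≤ m := hmax m' hup'
    rcases lt_or_eq_of_le hle with hlt | heq
    · exfalso
      have h1 : m' + 1 ≤ m := hlt
      have h2 := hUanti.antitone h1
      linarith
    · exact heq
  by_cases hcase : x₂ + m * b < ((N : ℝ) + 1) * d
  · -- type 0 tile, n = ⌊(x₂ + m b)/d⌋
    obtain ⟨n, hn⟩ : ∃ n : ℤ, n = ⌊(x₂ + m * b) / d⌋ := ⟨_, rfl⟩
    have f1 : (n : ℝ) * d ≤ x₂ + m * b := by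
      have h1 : (n : ℝ) ≤ (x₂ + m * b) / d := by rw [hn]; exact Int.floor_le _
      rwa [le_div_iff₀ hd] at h1
    have f2 : x₂ + m * b < ((n : ℝ) + 1) * d := by
      have h1 : (x₂ + m * b) / d < (n : ℝ) + 1 := by rw [hn]; exact Int.lt_floor_add_one _
      rwa [div_lt_iff₀ hd] at h1
    have f3 : n ≤ N := by
      have h1 : (x₂ + m * b) / d < ((N : ℤ) + 1 : ℤ) := by
        rw [div_lt_iff₀ hd]; push_cast; linarith
      have h2 := Int.floor_lt.mpr h1
      omega
    have f3' : (n : ℝ) * c ≤ (N : ℝ) * c := by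
      have h1 : (n : ℝ) ≤ (N : ℝ) := by exact_mod_cast f3
      exact mul_le_mul_of_nonneg_right h1 hc.le
    have f4 : x₁ < m * a + n * c + a := by
      have h5 : ((⌊(x₁ - m * a - a) / c⌋ : ℝ) + 1) * d < ((n : ℝ) + 1) * d := by linarith
      have h6 : (⌊(x₁ - m * a - a) / c⌋ : ℝ) < (n : ℝ) := by nlinarith
      have h8 : (⌊(x₁ - m * a - a) / c⌋ : ℝ) + 1 ≤ (n : ℝ) := by
        have h9 : ⌊(x₁ - m * a - a) / c⌋ < n := by exact_mod_cast h6
        exact_mod_cast h9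
      have h7 : (x₁ - m * a - a) / c < (n : ℝ) := by
        have := Int.lt_floor_add_one ((x₁ - m * a - a) / c)
        linarith
      rw [div_lt_iff₀ hc] at h7
      linarith
    refine ⟨(((m : ℝ) * a + n * c, (n : ℝ) * d - m * b), (0 : Fin 2)),
      ⟨⟨m, n, Or.inl rfl⟩, ?_⟩, ?_⟩
    · show ((x₁, x₂) : Pt) - ((m : ℝ) * a + n * c, (n : ℝ) * d - m * b) ∈
        rect ((![(a, d), (c, b)] : Fin 2 → ℝ × ℝ) 0).1 ((![(a, d), (c, b)] : Fin 2 → ℝ × ℝ) 0).2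
      simp only [Matrix.cons_val_zero]
      rw [sub_mem_rect_iff]
      exact ⟨⟨by linarith, by linarith⟩, by linarith, by linarith⟩
    · rintro ⟨p, i⟩ ⟨⟨m', n', (hz | hz)⟩, hcond⟩ <;>
        obtain ⟨hp, hi⟩ := Prod.mk.injEq .. ▸ hz <;> subst hp <;> subst hi
      · simp only [Matrix.cons_val_zero] at hcond
        rw [sub_mem_rect_iff] at hcond
        obtain ⟨⟨g1, g2⟩, g3, g4⟩ := hcond
        have hm' : m' = m := key m' n' (Or.inl ⟨g1, by linarith, g3, by linarith⟩)
        rw [hm'] at g1 g2 g3 g4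
        have hn' : n' = n := by
          rw [hn]
          exact (flu n' (x₂ + m * b) d hd (by linarith) (by linarith)).symm
        rw [hm', hn']
      · simp only [Matrix.cons_val_one, Matrix.head_cons, Matrix.cons_val_zero] at hcond
        rw [sub_mem_rect_iff] at hcond
        obtain ⟨⟨g1, g2⟩, g3, g4⟩ := hcond
        have hm' : m' = m := key m' n' (Or.inr ⟨g1, by linarith, by linarith, by linarith⟩)
        rw [hm'] at g1 g2 g3 g4
        exfalso
        have hn' : n' = N := by
          rw [hN]
          exact (flu n' (x₁ - m * a) c hc (by linarith) (by linarith)).symm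
        rw [hn'] at g3
        linarith
  · -- type 1 tile with n = N
    push_neg at hcase
    refine ⟨(((m : ℝ) * a + N * c, (N : ℝ) * d - m * b + d), (1 : Fin 2)),
      ⟨⟨m, N, Or.inr rfl⟩, ?_⟩, ?_⟩
    · show ((x₁, x₂) : Pt) - ((m : ℝ) * a + N * c, (N : ℝ) * d - m * b + d) ∈
        rect ((![(a, d), (c, b)] : Fin 2 → ℝ × ℝ) 1).1 ((![(a, d), (c, b)] : Fin 2 → ℝ × ℝ) 1).2
      simp only [Matrix.cons_val_one, Matrix.head_cons, Matrix.cons_val_zero]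
      rw [sub_mem_rect_iff]
      exact ⟨⟨by linarith, by linarith⟩, by linarith, by linarith⟩
    · rintro ⟨p, i⟩ ⟨⟨m', n', (hz | hz)⟩, hcond⟩ <;>
        obtain ⟨hp, hi⟩ := Prod.mk.injEq .. ▸ hz <;> subst hp <;> subst hi
      · simp only [Matrix.cons_val_zero] at hcond
        rw [sub_mem_rect_iff] at hcond
        obtain ⟨⟨g1, g2⟩, g3, g4⟩ := hcond
        have hm' : m' = m := key m' n' (Or.inl ⟨g1, by linarith, g3, by linarith⟩)
        rw [hm'] at g1 g2 g3 g4
        exfalso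
        have hn'N : (n' : ℝ) ≤ (N : ℝ) := by
          have h1 : (n' : ℝ) ≤ (x₁ - m * a) / c := by rw [le_div_iff₀ hc]; linarith
          have h2 : n' ≤ N := by rw [hN]; exact_mod_cast Int.le_floor.mpr (by exact_mod_cast h1)
          exact_mod_cast h2
        have h3 := mul_le_mul_of_nonneg_right (by linarith : (n' : ℝ) + 1 ≤ (N : ℝ) + 1) hd.le
        linarith
      · simp only [Matrix.cons_val_one, Matrix.head_cons, Matrix.cons_val_zero] at hcond
        rw [sub_mem_rect_iff] at hcond
        obtain ⟨⟨g1, g2⟩, g3, g4⟩ := hcond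
        have hm' : m' = m := key m' n' (Or.inr ⟨g1, by linarith, by linarith, by linarith⟩)
        rw [hm'] at g1 g2 g3 g4
        have hn' : n' = N := by
          rw [hN]
          exact (flu n' (x₁ - m * a) c hc (by linarith) (by linarith)).symm
        rw [hm', hn']


lemma trSet_trSet {k : ℕ} (u v : Pt) (P : Set (Pt × Fin k)) :
    trSet v (trSet u P) = trSet (u + v) P := by
  unfold trSet
  rw [Set.image_image]
  have h : (fun q : Pt × Fin k => ((q.1 - u) - v, q.2)) =
      fun q : Pt × Fin k => (q.1 - (u + v), q.2) := by
    funext q; rw [sub_sub]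
  rw [h]

lemma P0_period (a b c d : ℝ) (s t : ℤ) :
    trSet ((((s : ℝ) * a + t * c, (t : ℝ) * d - s * b)) : Pt) (P0 a b c d) = P0 a b c d := by
  ext z
  constructor
  · rintro ⟨w, ⟨m, n, (rfl | rfl)⟩, hz⟩
    · refine ⟨m - s, n - t, Or.inl ?_⟩
      rw [← hz]
      have e1 : ((m : ℝ) * a + n * c) - ((s : ℝ) * a + t * c)
          = ((m - s : ℤ) : ℝ) * a + ((n - t : ℤ) : ℝ) * c := by push_cast; ring
      have e2 : ((n : ℝ) * d - m * b) - ((t : ℝ) * d - s * b)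
          = ((n - t : ℤ) : ℝ) * d - ((m - s : ℤ) : ℝ) * b := by push_cast; ring
      show ((_, _) - (_, _), (0 : Fin 2)) = _
      rw [Prod.mk_sub_mk, e1, e2]
    · refine ⟨m - s, n - t, Or.inr ?_⟩
      rw [← hz]
      have e1 : ((m : ℝ) * a + n * c) - ((s : ℝ) * a + t * c)
          = ((m - s : ℤ) : ℝ) * a + ((n - t : ℤ) : ℝ) * c := by push_cast; ring
      have e2 : ((n : ℝ) * d - m * b + d) - ((t : ℝ) * d - s * b)
          = ((n - t : ℤ) : ℝ) * d - ((m - s : ℤ) : ℝ) * b + d := by push_cast; ring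
      show ((_, _) - (_, _), (1 : Fin 2)) = _
      rw [Prod.mk_sub_mk, e1, e2]
  · rintro ⟨m, n, (rfl | rfl)⟩
    · refine ⟨((((m + s : ℤ) : ℝ) * a + ((n + t : ℤ) : ℝ) * c,
        ((n + t : ℤ) : ℝ) * d - ((m + s : ℤ) : ℝ) * b), (0 : Fin 2)),
        ⟨m + s, n + t, Or.inl rfl⟩, ?_⟩
      have e1 : (((m + s : ℤ) : ℝ) * a + ((n + t : ℤ) : ℝ) * c) - ((s : ℝ) * a + t * c)
          = (m : ℝ) * a + n * c := by push_cast; ring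
      have e2 : (((n + t : ℤ) : ℝ) * d - ((m + s : ℤ) : ℝ) * b) - ((t : ℝ) * d - s * b)
          = (n : ℝ) * d - m * b := by push_cast; ring
      show ((_, _) - (_, _), (0 : Fin 2)) = _
      rw [Prod.mk_sub_mk, e1, e2]
    · refine ⟨((((m + s : ℤ) : ℝ) * a + ((n + t : ℤ) : ℝ) * c,
        ((n + t : ℤ) : ℝ) * d - ((m + s : ℤ) : ℝ) * b + d), (1 : Fin 2)),
        ⟨m + s, n + t, Or.inr rfl⟩, ?_⟩
      have e1 : (((m + s : ℤ) : ℝ) * a + ((n + t : ℤ) : ℝ) * c) - ((s : ℝ) * a + t * c)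
          = (m : ℝ) * a + n * c := by push_cast; ring
      have e2 : (((n + t : ℤ) : ℝ) * d - ((m + s : ℤ) : ℝ) * b + d) - ((t : ℝ) * d - s * b)
          = (n : ℝ) * d - m * b + d := by push_cast; ring
      show ((_, _) - (_, _), (1 : Fin 2)) = _
      rw [Prod.mk_sub_mk, e1, e2]

lemma exists_int_pos_pair (α₁ α₂ β₁ β₂ : ℝ) (he : α₁ * β₂ - α₂ * β₁ ≠ 0) :
    ∃ m n : ℤ, 0 < (m : ℝ) * α₁ + n * α₂ ∧ 0 < (m : ℝ) * β₁ + n * β₂ := by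
  have hfl : ∀ (x w : ℝ), x * w - |w| ≤ (⌊x⌋ : ℝ) * w := by
    intro x w
    rcases le_total 0 w with hw | hw
    · have h1 : x - 1 ≤ (⌊x⌋ : ℝ) := by linarith [Int.lt_floor_add_one x]
      have h2 := mul_le_mul_of_nonneg_right h1 hw
      rw [abs_of_nonneg hw]; nlinarith
    · have h1 : (⌊x⌋ : ℝ) ≤ x := Int.floor_le x
      have h2 := mul_le_mul_of_nonpos_right h1 hw
      rw [abs_of_nonpos hw]; linarith
  set e := α₁ * β₂ - α₂ * β₁ with hedef
  set R : ℝ := |α₁| + |α₂| + |β₁| + |β₂| + 1 with hRdef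
  have hR : |α₁| + |α₂| + |β₁| + |β₂| + 1 = R := rfl
  set z₁ := (β₂ - α₂) / e with hz₁
  set z₂ := (α₁ - β₁) / e with hz₂
  have hza : z₁ * α₁ + z₂ * α₂ = 1 := by
    rw [hz₁, hz₂]; field_simp [hedef]; ring
  have hzb : z₁ * β₁ + z₂ * β₂ = 1 := by
    rw [hz₁, hz₂]; field_simp [hedef]; ring
  refine ⟨⌊R * z₁⌋, ⌊R * z₂⌋, ?_, ?_⟩
  · have h1 := hfl (R * z₁) α₁
    have h2 := hfl (R * z₂) α₂
    have h3 : R * z₁ * α₁ + R * z₂ * α₂ = R := by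
      calc R * z₁ * α₁ + R * z₂ * α₂ = R * (z₁ * α₁ + z₂ * α₂) := by ring
        _ = R * 1 := by rw [hza]
        _ = R := mul_one R
    have h4 : 0 ≤ |β₁| := abs_nonneg _
    have h5 : 0 ≤ |β₂| := abs_nonneg _
    linarith
  · have h1 := hfl (R * z₁) β₁
    have h2 := hfl (R * z₂) β₂
    have h3 : R * z₁ * β₁ + R * z₂ * β₂ = R := by
      calc R * z₁ * β₁ + R * z₂ * β₂ = R * (z₁ * β₁ + z₂ * β₂) := by ring
        _ = R * 1 := by rw [hzb]
        _ = R := mul_one R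
    have h4 : 0 ≤ |α₁| := abs_nonneg _
    have h5 : 0 ≤ |α₂| := abs_nonneg _
    linarith


/-- From any pair of independent vectors `(A1, B1)`, `(A2, B2)` one can find a
positive quadruple `a b c d` such that both vectors are integer combinations of
`u = (a, -b)` and `w = (c, d)`. -/
lemma exists_basis (A1 A2 B1 B2 : ℝ) (hdet : A1 * B2 - A2 * B1 ≠ 0) :
    ∃ a b c d : ℝ, 0 < a ∧ 0 < b ∧ 0 < c ∧ 0 < d ∧
      ∃ k₁ k₂ k₃ k₄ : ℤ,
        (k₁ : ℝ) * a + (k₂ : ℝ) * c = A1 ∧ (k₂ : ℝ) * d - (k₁ : ℝ) * b = B1 ∧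
        (k₃ : ℝ) * a + (k₄ : ℝ) * c = A2 ∧ (k₄ : ℝ) * d - (k₃ : ℝ) * b = B2 := by
  obtain ⟨m₂, n₂, hw1, hw2⟩ := exists_int_pos_pair A1 A2 B1 B2 hdet
  obtain ⟨m₁, n₁, hu1, hu2'⟩ := exists_int_pos_pair A1 A2 (-B1) (-B2)
    (by
      have h : A1 * -B2 - A2 * -B1 = -(A1 * B2 - A2 * B1) := by ring
      rw [h]
      exact neg_ne_zero.mpr hdet)
  have hu2 : (m₁ : ℝ) * B1 + n₁ * B2 < 0 := by linarith
  have hdetid : ((m₁ * n₂ - n₁ * m₂ : ℤ) : ℝ) * (A1 * B2 - A2 * B1)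
      = ((m₁ : ℝ) * A1 + n₁ * A2) * ((m₂ : ℝ) * B1 + n₂ * B2)
        - ((m₁ : ℝ) * B1 + n₁ * B2) * ((m₂ : ℝ) * A1 + n₂ * A2) := by
    push_cast
    ring
  have hdetpos : 0 < ((m₁ : ℝ) * A1 + n₁ * A2) * ((m₂ : ℝ) * B1 + n₂ * B2)
        - ((m₁ : ℝ) * B1 + n₁ * B2) * ((m₂ : ℝ) * A1 + n₂ * A2) := by
    nlinarith [mul_pos hu1 hw2,
      mul_pos (by linarith : (0:ℝ) < -((m₁ : ℝ) * B1 + n₁ * B2)) hw1]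
  have hδ : ((m₁ * n₂ - n₁ * m₂ : ℤ) : ℝ) ≠ 0 := by
    intro h0
    rw [h0, zero_mul] at hdetid
    linarith
  have hδ' : ((m₁ : ℝ) * n₂ - (n₁ : ℝ) * m₂) ≠ 0 := by push_cast at hδ; exact hδ
  have hδsq : (0 : ℝ) < ((m₁ * n₂ - n₁ * m₂ : ℤ) : ℝ) ^ 2 := pow_two_pos_of_ne_zero hδ
  refine ⟨((m₁ : ℝ) * A1 + n₁ * A2) / ((m₁ * n₂ - n₁ * m₂ : ℤ) : ℝ) ^ 2,
    -((m₁ : ℝ) * B1 + n₁ * B2) / ((m₁ * n₂ - n₁ * m₂ : ℤ) : ℝ) ^ 2,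
    ((m₂ : ℝ) * A1 + n₂ * A2) / ((m₁ * n₂ - n₁ * m₂ : ℤ) : ℝ) ^ 2,
    ((m₂ : ℝ) * B1 + n₂ * B2) / ((m₁ * n₂ - n₁ * m₂ : ℤ) : ℝ) ^ 2,
    div_pos hu1 hδsq, div_pos (by linarith) hδsq, div_pos hw1 hδsq, div_pos hw2 hδsq,
    n₂ * (m₁ * n₂ - n₁ * m₂), -(n₁ * (m₁ * n₂ - n₁ * m₂)),
    -(m₂ * (m₁ * n₂ - n₁ * m₂)), m₁ * (m₁ * n₂ - n₁ * m₂),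
    ?_, ?_, ?_, ?_⟩ <;>
  · push_cast
    have h1 : (n₂ : ℝ) * m₁ - n₁ * m₂ ≠ 0 := by contrapose! hδ'; linarith
    have h2 : -((m₂ : ℝ) * n₁) + m₁ * n₂ ≠ 0 := by contrapose! hδ'; linarith
    have h3 : (m₁ : ℝ) * n₂ ≠ m₂ * n₁ := by contrapose! hδ'; linarith
    have h4 : (m₂ : ℝ) * n₁ ≠ m₁ * n₂ := by contrapose! hδ'; linarith
    field_simp
    ring

/-- let `M` be an invertible `2 × 2` real matrix whose first column has
rationally independent entries, as does its second column. Consider the `ℝ²` action on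
the torus `𝕋² = ℝ²/ℤ²` given by `S_v x = x + M v (mod ℤ²)`. Then there is a pair of
half-open rectangular tiles and an equivariant map `Φ` from `𝕋²` to the corresponding
tiling space: `Φ (S_v x) = S_v^Y (Φ x)` for all `x` and `v`. -/
theorem torus_action_tileable (M : Matrix (Fin 2) (Fin 2) ℝ) (hM : IsUnit M.det)
    (hcol1 : ∀ q r : ℚ, (q : ℝ) * M 0 0 + (r : ℝ) * M 1 0 = 0 → q = 0 ∧ r = 0)
    (hcol2 : ∀ q r : ℚ, (q : ℝ) * M 0 1 + (r : ℝ) * M 1 1 = 0 → q = 0 ∧ r = 0) :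
    ∃ sz : Fin 2 → ℝ × ℝ, (∀ j, 0 < (sz j).1 ∧ 0 < (sz j).2) ∧
      ∃ Φ : AddCircle (1 : ℝ) × AddCircle (1 : ℝ) → Tilings sz,
        ∀ (x : AddCircle (1 : ℝ) × AddCircle (1 : ℝ)) (v : ℝ × ℝ),
          Φ (x + (((M 0 0 * v.1 + M 0 1 * v.2 : ℝ) : AddCircle (1 : ℝ)),
                  ((M 1 0 * v.1 + M 1 1 * v.2 : ℝ) : AddCircle (1 : ℝ)))) =
            S sz v (Φ x) := by
  classical
  have hM' : M 0 0 * M 1 1 - M 0 1 * M 1 0 ≠ 0 := by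
    have h1 : M.det = M 0 0 * M 1 1 - M 0 1 * M 1 0 := Matrix.det_fin_two M
    rw [h1] at hM
    exact IsUnit.ne_zero hM
  have hdet : (M 1 1 / (M 0 0 * M 1 1 - M 0 1 * M 1 0))
        * (M 0 0 / (M 0 0 * M 1 1 - M 0 1 * M 1 0))
      - (-(M 0 1) / (M 0 0 * M 1 1 - M 0 1 * M 1 0))
        * (-(M 1 0) / (M 0 0 * M 1 1 - M 0 1 * M 1 0)) ≠ 0 := by
    have h : (M 1 1 / (M 0 0 * M 1 1 - M 0 1 * M 1 0))
        * (M 0 0 / (M 0 0 * M 1 1 - M 0 1 * M 1 0))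
      - (-(M 0 1) / (M 0 0 * M 1 1 - M 0 1 * M 1 0))
        * (-(M 1 0) / (M 0 0 * M 1 1 - M 0 1 * M 1 0))
        = 1 / (M 0 0 * M 1 1 - M 0 1 * M 1 0) := by
      field_simp
    rw [h]
    exact one_div_ne_zero hM'
  obtain ⟨a, b, c, d, ha, hb, hc, hd, k₁, k₂, k₃, k₄, Hp1, Hp2, Hq1, Hq2⟩ :=
    exists_basis (M 1 1 / (M 0 0 * M 1 1 - M 0 1 * M 1 0))
      (-(M 0 1) / (M 0 0 * M 1 1 - M 0 1 * M 1 0))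
      (-(M 1 0) / (M 0 0 * M 1 1 - M 0 1 * M 1 0))
      (M 0 0 / (M 0 0 * M 1 1 - M 0 1 * M 1 0)) hdet
  have hper : ∀ k l : ℤ,
      trSet (((M 1 1 * (k : ℝ) - M 0 1 * (l : ℝ)) / (M 0 0 * M 1 1 - M 0 1 * M 1 0),
              (M 0 0 * (l : ℝ) - M 1 0 * (k : ℝ)) / (M 0 0 * M 1 1 - M 0 1 * M 1 0)) : Pt)
          (P0 a b c d) = P0 a b c d := by
    intro k l
    have e1 : (M 1 1 * (k : ℝ) - M 0 1 * (l : ℝ)) / (M 0 0 * M 1 1 - M 0 1 * M 1 0)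
        = (k : ℝ) * (M 1 1 / (M 0 0 * M 1 1 - M 0 1 * M 1 0))
          + (l : ℝ) * (-(M 0 1) / (M 0 0 * M 1 1 - M 0 1 * M 1 0)) := by
      field_simp
      ring
    have e2 : (M 0 0 * (l : ℝ) - M 1 0 * (k : ℝ)) / (M 0 0 * M 1 1 - M 0 1 * M 1 0)
        = (k : ℝ) * (-(M 1 0) / (M 0 0 * M 1 1 - M 0 1 * M 1 0))
          + (l : ℝ) * (M 0 0 / (M 0 0 * M 1 1 - M 0 1 * M 1 0)) := by
      field_simp
      ring
    have hG : (((M 1 1 * (k : ℝ) - M 0 1 * (l : ℝ)) / (M 0 0 * M 1 1 - M 0 1 * M 1 0),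
              (M 0 0 * (l : ℝ) - M 1 0 * (k : ℝ)) / (M 0 0 * M 1 1 - M 0 1 * M 1 0)) : Pt)
        = ((((k * k₁ + l * k₃ : ℤ)) : ℝ) * a + (((k * k₂ + l * k₄ : ℤ)) : ℝ) * c,
           (((k * k₂ + l * k₄ : ℤ)) : ℝ) * d - (((k * k₁ + l * k₃ : ℤ)) : ℝ) * b) := by
      refine Prod.ext ?_ ?_
      · show (M 1 1 * (k : ℝ) - M 0 1 * (l : ℝ)) / (M 0 0 * M 1 1 - M 0 1 * M 1 0) = _
        rw [e1]
        push_cast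
        linear_combination (-(k : ℝ)) * Hp1 - (l : ℝ) * Hq1
      · show (M 0 0 * (l : ℝ) - M 1 0 * (k : ℝ)) / (M 0 0 * M 1 1 - M 0 1 * M 1 0) = _
        rw [e2]
        push_cast
        linear_combination (-(k : ℝ)) * Hp2 - (l : ℝ) * Hq2
    rw [hG]
    exact P0_period a b c d _ _
  have hTil : IsTiling ![(a, d), (c, b)] (P0 a b c d) := isTiling_P0 ha hb hc hd
  refine ⟨![(a, d), (c, b)], ?_, ?_⟩
  · intro j
    fin_cases j
    · exact ⟨ha, hd⟩
    · exact ⟨hc, hb⟩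
  · refine ⟨fun x => Quotient.liftOn₂' x.1 x.2
      (fun z₁ z₂ => S ![(a, d), (c, b)]
        (((M 1 1 * z₁ - M 0 1 * z₂) / (M 0 0 * M 1 1 - M 0 1 * M 1 0),
          (M 0 0 * z₂ - M 1 0 * z₁) / (M 0 0 * M 1 1 - M 0 1 * M 1 0)) : Pt)
        ⟨P0 a b c d, hTil⟩) ?_, ?_⟩
    · intro z₁ z₂ y₁ y₂ h1 h2
      rw [QuotientAddGroup.leftRel_apply] at h1 h2
      obtain ⟨k, hk⟩ := AddSubgroup.mem_zmultiples_iff.mp h1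
      obtain ⟨l, hl⟩ := AddSubgroup.mem_zmultiples_iff.mp h2
      rw [zsmul_eq_mul, mul_one] at hk hl
      have hy₁ : y₁ = z₁ + (k : ℝ) := by linarith [hk.le, hk.ge]
      have hy₂ : y₂ = z₂ + (l : ℝ) := by linarith [hl.le, hl.ge]
      subst hy₁ hy₂
      apply Subtype.ext
      show Tiling2.trSet _ (P0 a b c d) = Tiling2.trSet _ (P0 a b c d)
      have hsplit : (((M 1 1 * (z₁ + (k : ℝ)) - M 0 1 * (z₂ + (l : ℝ)))
              / (M 0 0 * M 1 1 - M 0 1 * M 1 0),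
          (M 0 0 * (z₂ + (l : ℝ)) - M 1 0 * (z₁ + (k : ℝ)))
              / (M 0 0 * M 1 1 - M 0 1 * M 1 0)) : Pt)
          = (((M 1 1 * (k : ℝ) - M 0 1 * (l : ℝ)) / (M 0 0 * M 1 1 - M 0 1 * M 1 0),
              (M 0 0 * (l : ℝ) - M 1 0 * (k : ℝ)) / (M 0 0 * M 1 1 - M 0 1 * M 1 0)) : Pt)
            + (((M 1 1 * z₁ - M 0 1 * z₂) / (M 0 0 * M 1 1 - M 0 1 * M 1 0),
              (M 0 0 * z₂ - M 1 0 * z₁) / (M 0 0 * M 1 1 - M 0 1 * M 1 0)) : Pt) := by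
        rw [Prod.mk_add_mk]
        refine Prod.ext ?_ ?_ <;>
          · show _ = _ + _
            rw [← add_div]
            ring_nf
      rw [hsplit, ← trSet_trSet, hper k l]
    · rintro ⟨x₁, x₂⟩ v
      refine Quotient.inductionOn₂' x₁ x₂ ?_
      intro z₁ z₂
      show S ![(a, d), (c, b)]
          (((M 1 1 * (z₁ + (M 0 0 * v.1 + M 0 1 * v.2))
              - M 0 1 * (z₂ + (M 1 0 * v.1 + M 1 1 * v.2))) / (M 0 0 * M 1 1 - M 0 1 * M 1 0),
            (M 0 0 * (z₂ + (M 1 0 * v.1 + M 1 1 * v.2))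
              - M 1 0 * (z₁ + (M 0 0 * v.1 + M 0 1 * v.2))) / (M 0 0 * M 1 1 - M 0 1 * M 1 0)) : Pt)
          (⟨P0 a b c d, hTil⟩ : Tilings ![(a, d), (c, b)])
        = S ![(a, d), (c, b)] v
            (S ![(a, d), (c, b)]
              (((M 1 1 * z₁ - M 0 1 * z₂) / (M 0 0 * M 1 1 - M 0 1 * M 1 0),
                (M 0 0 * z₂ - M 1 0 * z₁) / (M 0 0 * M 1 1 - M 0 1 * M 1 0)) : Pt)
              (⟨P0 a b c d, hTil⟩ : Tilings ![(a, d), (c, b)]))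
      have hGMv : (((M 1 1 * (z₁ + (M 0 0 * v.1 + M 0 1 * v.2))
            - M 0 1 * (z₂ + (M 1 0 * v.1 + M 1 1 * v.2))) / (M 0 0 * M 1 1 - M 0 1 * M 1 0),
          (M 0 0 * (z₂ + (M 1 0 * v.1 + M 1 1 * v.2))
            - M 1 0 * (z₁ + (M 0 0 * v.1 + M 0 1 * v.2))) / (M 0 0 * M 1 1 - M 0 1 * M 1 0)) : Pt)
          = (((M 1 1 * z₁ - M 0 1 * z₂) / (M 0 0 * M 1 1 - M 0 1 * M 1 0),
              (M 0 0 * z₂ - M 1 0 * z₁) / (M 0 0 * M 1 1 - M 0 1 * M 1 0)) : Pt)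
            + (v.1, v.2) := by
        rw [Prod.mk_add_mk]
        refine Prod.ext ?_ ?_
        · show (M 1 1 * (z₁ + (M 0 0 * v.1 + M 0 1 * v.2))
              - M 0 1 * (z₂ + (M 1 0 * v.1 + M 1 1 * v.2))) / (M 0 0 * M 1 1 - M 0 1 * M 1 0)
            = (M 1 1 * z₁ - M 0 1 * z₂) / (M 0 0 * M 1 1 - M 0 1 * M 1 0) + v.1
          rw [div_add' _ _ _ hM', div_left_inj' hM']
          ring
        · show (M 0 0 * (z₂ + (M 1 0 * v.1 + M 1 1 * v.2))
              - M 1 0 * (z₁ + (M 0 0 * v.1 + M 0 1 * v.2))) / (M 0 0 * M 1 1 - M 0 1 * M 1 0)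
            = (M 0 0 * z₂ - M 1 0 * z₁) / (M 0 0 * M 1 1 - M 0 1 * M 1 0) + v.2
          rw [div_add' _ _ _ hM', div_left_inj' hM']
          ring
      rw [hGMv]
      have hv : ((v.1, v.2) : ℝ × ℝ) = v := rfl
      rw [hv]
      exact Subtype.ext (trSet_trSet _ v _).symm
end
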